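/- Suppose G is a finite connected planar 4-valent multigraph embedded in the sphere whose face-degree counts f i satisfy ∑_i (4 - i) * f i = 8 and f 2 = 0. If every face of degree 3 is adjacent (shares an edge) only with faces of degree at least 6, then assigning charge 4 - i to each i-sided face and discharging 1/3 from each triangle across each of its three edges leaves every face with charge ≤ 0, contradicting that total charge is 8. Hence there exists a triangle adjacent to a face of degree 3, 4, or 5. -/
import Mathlib


/-- A connected lune-free link diagram, abstracted via its faces, their degrees,
and the number of edges shared by pairs of faces. -/
structure LuneFreeDiagram where
  Face : Type
  [fin : Fintype Face]
  /-- number of sides of a face -/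
  deg : Face → ℕ
  /-- number of edges shared by two faces -/
  shared : Face → Face → ℕ
  shared_symm : ∀ x y, shared x y = shared y x
  /-- every edge of a face borders some face -/
  edges_count : ∀ x, ∑ y, shared x y = deg x
  /-- lune-free: every face has at least 3 sides -/
  lune_free : ∀ x, 3 ≤ deg x
  /-- Euler's formula for 4-valent plane graphs: total charge is 8 -/
  euler : ∑ x, ((4 : ℤ) - deg x) = 8

attribute [instance] LuneFreeDiagram.fin

/-- In a connected lune-free diagram there is a triangle adjacent (sharing an edge)
to a face of degree 3, 4, or 5: otherwise discharging 1/3 from each triangle across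
each of its edges would leave every face with charge ≤ 0, contradicting total charge 8. -/
theorem exists_triangle_adjacent_small_face (D : LuneFreeDiagram) :
    ∃ x y : D.Face, D.deg x = 3 ∧ 0 < D.shared x y ∧
      D.deg y ∈ ({3, 4, 5} : Set ℕ) := by
  by_contra hcon
  push_neg at hcon
  -- 3 × (charge after discharging)
  set F : D.Face → ℤ := fun x =>
    3 * (4 - D.deg x) - (if D.deg x = 3 then (D.deg x : ℤ) else 0)
      + ∑ y, (if D.deg y = 3 then (D.shared y x : ℤ) else 0) with hF
  -- total is preserved: 24
  have hsum : ∑ x, F x = 24 := by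
    simp only [hF]
    rw [Finset.sum_add_distrib, Finset.sum_sub_distrib]
    have h1 : ∑ x, (3 : ℤ) * (4 - D.deg x) = 24 := by
      rw [← Finset.mul_sum, D.euler]; ring
    have h2 : ∑ x : D.Face, ∑ y, (if D.deg y = 3 then (D.shared y x : ℤ) else 0)
        = ∑ x, (if D.deg x = 3 then (D.deg x : ℤ) else 0) := by
      rw [Finset.sum_comm]
      refine Finset.sum_congr rfl fun y _ => ?_
      by_cases hy : D.deg y = 3
      · rw [if_pos hy]
        simp only [if_pos hy]
        rw [← Nat.cast_sum]
        norm_cast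
        exact D.edges_count y
      · simp [hy]
    rw [h2, h1]; ring
  -- under the negated hypothesis every face ends with nonpositive charge
  have hnonpos : ∀ x, F x ≤ 0 := by
    intro x
    have hlf := D.lune_free x
    have hrec0 : D.deg x ≤ 5 →
        ∑ y, (if D.deg y = 3 then (D.shared y x : ℤ) else 0) = 0 := by
      intro hx5
      refine Finset.sum_eq_zero fun y _ => ?_
      by_cases hy : D.deg y = 3
      · simp only [hy, if_true]
        by_cases hs : 0 < D.shared y x
        · exfalso
          refine hcon y x hy hs ?_
          simp only [Set.mem_insert_iff, Set.mem_singleton_iff]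
          omega
        · simp [Nat.eq_zero_of_not_pos hs]
      · simp [hy]
    by_cases hx5 : D.deg x ≤ 5
    · rw [hF]
      simp only [hrec0 hx5, add_zero]
      split_ifs with h3 <;> [rw [h3]; skip] <;> push_cast <;> omega
    · -- deg x ≥ 6 : receives at most (1/3)·deg x
      have hb : ∑ y, (if D.deg y = 3 then (D.shared y x : ℤ) else 0)
          ≤ (D.deg x : ℤ) := by
        have : ∑ y, (if D.deg y = 3 then (D.shared y x : ℤ) else 0)
            ≤ ∑ y, (D.shared y x : ℤ) := by
          refine Finset.sum_le_sum fun y _ => ?_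
          split_ifs <;> simp
        refine this.trans_eq ?_
        rw [← Nat.cast_sum]
        norm_cast
        rw [← D.edges_count x]
        exact Finset.sum_congr rfl fun y _ => D.shared_symm y x
      rw [hF]
      have h3 : D.deg x ≠ 3 := by omega
      simp only [h3, if_false, sub_zero]
      have : (6 : ℤ) ≤ (D.deg x : ℤ) := by exact_mod_cast (by omega : 6 ≤ D.deg x)
      linarith
  have : ∑ x, F x ≤ 0 := Finset.sum_nonpos fun x _ => hnonpos x
  omega
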